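/- Let K, N > 0 and a, b ∈ ℤ, and let 𝓛 be a (K,N)-periodic lattice path with 𝓛 ≤ 𝓛[a,b]. Then Δ(𝓛) is a finite set containing exactly a*N − b*K cells. -/

import Mathlib

/-- A `(K,N)`-periodic lattice path. -/
def IsLP (K N : ℤ) (L : ℤ → ℤ) : Prop :=
  Antitone L ∧ ∀ y : ℤ, L (y + N) = L y - K

/-- The shifted path `L[a,b] : y ↦ L(y+b) + a`. -/
def LPshift (a b : ℤ) (L : ℤ → ℤ) : ℤ → ℤ := fun y => L (y + b) + a

/-- The extended fundamental domain `Δ'(L)`. -/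
def DeltaP (a b : ℤ) (L : ℤ → ℤ) : Set (ℤ × ℤ) :=
  {p : ℤ × ℤ | L p.2 ≤ p.1 ∧ p.1 < LPshift a b L p.2}

/-- The fundamental domain `Δ(L) = {(x,y) ∈ Δ'(L) : 0 ≤ y < N}`. -/
def Delta (N a b : ℤ) (L : ℤ → ℤ) : Set (ℤ × ℤ) :=
  {p : ℤ × ℤ | p ∈ DeltaP a b L ∧ 0 ≤ p.2 ∧ p.2 < N}

lemma sum_shift_one (N : ℤ) (f : ℤ → ℤ) :
    ∑ y ∈ Finset.Ico (0:ℤ) N, f (y + 1) = ∑ y ∈ Finset.Ico (1:ℤ) (N+1), f y := by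
  rw [show Finset.Ico (1:ℤ) (N+1) = (Finset.Ico (0:ℤ) N).map (addRightEmbedding 1) by
    rw [Finset.map_add_right_Ico]; norm_num, Finset.sum_map]
  simp [addRightEmbedding]

lemma sum_window (N K : ℤ) (hN : 0 < N) (L : ℤ → ℤ) (hper : ∀ y : ℤ, L (y + N) = L y - K)
    (c : ℤ) :
    ∑ y ∈ Finset.Ico (0:ℤ) N, L (y + c) = (∑ y ∈ Finset.Ico (0:ℤ) N, L y) - c * K := by
  have hstep : ∀ c : ℤ, ∑ y ∈ Finset.Ico (0:ℤ) N, L (y + (c+1))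
      = (∑ y ∈ Finset.Ico (0:ℤ) N, L (y + c)) - K := by
    intro c
    have h1 : ∑ y ∈ Finset.Ico (0:ℤ) N, L (y + (c+1))
        = ∑ y ∈ Finset.Ico (1:ℤ) (N+1), L (y + c) := by
      rw [← sum_shift_one N (fun y => L (y + c))]
      congr 1; ext y; ring_nf
    have h01 : Finset.Ico (0:ℤ) 1 = {0} := by ext x; simp; omega
    have hN1 : Finset.Ico (0:ℤ) (N+1) = Finset.Ico 0 N ∪ Finset.Ico N (N+1) := by
      rw [Finset.Ico_union_Ico_eq_Ico] <;> omega
    have hNN1 : Finset.Ico N (N+1) = {N} := by ext x; simp; omega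
    have h2 : Finset.Ico (0:ℤ) (N+1) = Finset.Ico 0 1 ∪ Finset.Ico 1 (N+1) := by
      rw [Finset.Ico_union_Ico_eq_Ico] <;> omega
    have d1 : Disjoint (Finset.Ico (0:ℤ) N) (Finset.Ico N (N+1)) := by
      rw [Finset.disjoint_left]; intro x hx hx'; simp at hx hx'; omega
    have d2 : Disjoint (Finset.Ico (0:ℤ) 1) (Finset.Ico 1 (N+1)) := by
      rw [Finset.disjoint_left]; intro x hx hx'; simp at hx hx'; omega
    have e1 : ∑ y ∈ Finset.Ico (0:ℤ) (N+1), L (y + c)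
        = (∑ y ∈ Finset.Ico (0:ℤ) N, L (y + c)) + L (N + c) := by
      rw [hN1, Finset.sum_union d1, hNN1]; simp
    have e2 : ∑ y ∈ Finset.Ico (0:ℤ) (N+1), L (y + c)
        = L (0 + c) + ∑ y ∈ Finset.Ico (1:ℤ) (N+1), L (y + c) := by
      rw [h2, Finset.sum_union d2, h01]; simp
    have hp : L (N + c) = L (0 + c) - K := by
      have := hper c; simpa [add_comm] using this
    rw [h1]; omega
  induction c using Int.induction_on with
  | zero => simp
  | succ n ih =>
      have := hstep n
      rw [this, ih]; ring
  | pred n ih =>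
      have := hstep (-(n+1))
      have h' : ∑ y ∈ Finset.Ico (0:ℤ) N, L (y + (-(n+1)+1))
          = ∑ y ∈ Finset.Ico (0:ℤ) N, L (y + (-(n:ℤ))) := by
        congr 1; ext y; ring_nf
      rw [h', ih] at this
      have h'' : ∑ y ∈ Finset.Ico (0:ℤ) N, L (y + (-(n:ℤ) - 1))
          = ∑ y ∈ Finset.Ico (0:ℤ) N, L (y + -((n:ℤ)+1)) := by
        congr 1; ext y; ring_nf
      push_cast
      push_cast at this h''
      linarith

/-- If `L ≤ L[a,b]`, then `Δ(L)` is finite with exactly `a*N − b*K` cells. -/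
theorem Delta_card (K N a b : ℤ) (hK : 0 < K) (hN : 0 < N)
    (L : ℤ → ℤ) (hL : IsLP K N L) (hle : ∀ y : ℤ, L y ≤ LPshift a b L y) :
    (Delta N a b L).Finite ∧ ((Delta N a b L).ncard : ℤ) = a * N - b * K := by
  set F : Finset (ℤ × ℤ) :=
    (Finset.Ico (0:ℤ) N).biUnion
      (fun y => (Finset.Ico (L y) (L (y+b) + a)).image (fun x => (x, y))) with hF
  have hset : Delta N a b L = ↑F := by
    ext ⟨x, y⟩
    simp only [Delta, DeltaP, LPshift, Set.mem_setOf_eq, hF, Finset.coe_biUnion,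
      Finset.mem_coe, Finset.mem_biUnion, Finset.mem_image, Finset.mem_Ico,
      Set.mem_iUnion, Prod.mk.injEq]
    constructor
    · rintro ⟨⟨h1, h2⟩, h3, h4⟩
      exact ⟨y, ⟨h3, h4⟩, x, ⟨h1, h2⟩, rfl, rfl⟩
    · rintro ⟨y', ⟨h3, h4⟩, x', ⟨h1, h2⟩, rfl, rfl⟩
      exact ⟨⟨h1, h2⟩, h3, h4⟩
  have hdisj : ∀ y ∈ Finset.Ico (0:ℤ) N, ∀ y' ∈ Finset.Ico (0:ℤ) N, y ≠ y' →
      Disjoint ((Finset.Ico (L y) (L (y+b) + a)).image (fun x => (x, y)))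
        ((Finset.Ico (L y') (L (y'+b) + a)).image (fun x => (x, y'))) := by
    intro y _ y' _ hne
    rw [Finset.disjoint_left]
    rintro ⟨x, z⟩ h h'
    simp only [Finset.mem_image, Prod.mk.injEq] at h h'
    obtain ⟨_, _, _, rfl⟩ := h
    obtain ⟨_, _, _, h2⟩ := h'
    exact hne h2.symm
  have hcard : (F.card : ℤ) = a * N - b * K := by
    rw [hF, Finset.card_biUnion hdisj]
    have : ∀ y ∈ Finset.Ico (0:ℤ) N,
        (((Finset.Ico (L y) (L (y+b) + a)).image (fun x => (x, y))).card : ℤ)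
        = (L (y+b) + a) - L y := by
      intro y _
      rw [Finset.card_image_of_injective _ (fun x x' h => (Prod.mk.injEq .. ▸ h).1),
        Int.card_Ico]
      have := hle y
      simp only [LPshift] at this
      rw [Int.toNat_of_nonneg (by omega)]
    push_cast
    rw [Finset.sum_congr rfl (fun y hy => by exact_mod_cast this y hy)]
    rw [Finset.sum_sub_distrib, Finset.sum_add_distrib,
      sum_window N K hN L hL.2 b]
    simp [Int.card_Ico, Int.toNat_of_nonneg hN.le]
    ring
  rw [hset, Set.ncard_coe_finset]
  exact ⟨F.finite_toSet, hcard⟩
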